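/- Scalar version of the infinitesimal splitting theorem: if s : ℝ → ℝ is differentiable and satisfies s'(t) + s(t)² + r(t) = 0 for all t ∈ ℝ, where r : ℝ → ℝ is continuous with r(t) ≥ 0, then s(t) = 0 and r(t) = 0 for all t. -/

import Mathlib

open Real Set

/-- Scalar infinitesimal splitting theorem: if `s' + s² + r = 0` on all of `ℝ` with
`r` continuous and `r ≥ 0`, then `s ≡ 0` and `r ≡ 0`. -/
theorem stmt_11 (s r : ℝ → ℝ)
    (hs : ∀ t : ℝ, HasDerivAt s (-(s t ^ 2 + r t)) t)
    (hrc : Continuous r)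
    (hr : ∀ t : ℝ, 0 ≤ r t) :
    ∀ t : ℝ, s t = 0 ∧ r t = 0 := by
  have hdiff : Differentiable ℝ s := fun t => (hs t).differentiableAt
  have hanti : Antitone s := by
    apply antitone_of_deriv_nonpos hdiff
    intro t
    rw [(hs t).deriv]
    nlinarith [hr t, sq_nonneg (s t)]
  have hzero : ∀ t, s t = 0 := by
    intro t₀
    by_contra h
    rcases lt_or_gt_of_ne h with hneg | hpos
    · -- s t₀ < 0 : work on Ici t₀ where s < 0
      have hsneg : ∀ t ∈ Ici t₀, s t < 0 := fun t ht => lt_of_le_of_lt (hanti ht) hneg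
      set u : ℝ → ℝ := fun t => (s t)⁻¹ - t with hu
      have hud : ∀ t ∈ Ici t₀, HasDerivAt u (r t / s t ^ 2) t := by
        intro t ht
        have hne : s t ≠ 0 := (hsneg t ht).ne
        have h1 := ((hs t).inv hne).sub (hasDerivAt_id t)
        refine h1.congr_deriv ?_
        rw [neg_neg, add_div, div_self (pow_ne_zero 2 hne)]; ring
      have hcont : ContinuousOn u (Ici t₀) := fun t ht =>
        ((hud t ht).continuousAt).continuousWithinAt
      have hmono : MonotoneOn u (Ici t₀) := by
        apply monotoneOn_of_deriv_nonneg (convex_Ici t₀) hcont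
        · intro t ht
          rw [interior_Ici] at ht
          exact (hud t (mem_Ici.mpr (le_of_lt (mem_Ioi.mp ht)))).differentiableAt.differentiableWithinAt
        · intro t ht
          rw [interior_Ici] at ht
          rw [(hud t (mem_Ici.mpr (le_of_lt (mem_Ioi.mp ht)))).deriv]
          exact div_nonneg (hr t) (sq_nonneg _)
      set t₁ : ℝ := t₀ + 1 - (s t₀)⁻¹ with ht₁
      have hinv0 : (s t₀)⁻¹ < 0 := inv_lt_zero.mpr hneg
      have ht₁mem : t₁ ∈ Ici t₀ := by simp only [mem_Ici, ht₁]; linarith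
      have := hmono (self_mem_Ici) ht₁mem (by rw [ht₁]; linarith)
      have hinv1 : (s t₁)⁻¹ < 0 := inv_lt_zero.mpr (hsneg t₁ ht₁mem)
      simp only [hu] at this
      linarith
    · -- s t₀ > 0 : work on Iic t₀ where s > 0
      have hspos : ∀ t ∈ Iic t₀, 0 < s t := fun t ht => lt_of_lt_of_le hpos (hanti ht)
      set u : ℝ → ℝ := fun t => (s t)⁻¹ - t with hu
      have hud : ∀ t ∈ Iic t₀, HasDerivAt u (r t / s t ^ 2) t := by
        intro t ht
        have hne : s t ≠ 0 := (hspos t ht).ne'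
        have h1 := ((hs t).inv hne).sub (hasDerivAt_id t)
        refine h1.congr_deriv ?_
        rw [neg_neg, add_div, div_self (pow_ne_zero 2 hne)]; ring
      have hcont : ContinuousOn u (Iic t₀) := fun t ht =>
        ((hud t ht).continuousAt).continuousWithinAt
      have hmono : MonotoneOn u (Iic t₀) := by
        apply monotoneOn_of_deriv_nonneg (convex_Iic t₀) hcont
        · intro t ht
          rw [interior_Iic] at ht
          exact (hud t (mem_Iic.mpr (le_of_lt (mem_Iio.mp ht)))).differentiableAt.differentiableWithinAt
        · intro t ht
          rw [interior_Iic] at ht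
          rw [(hud t (mem_Iic.mpr (le_of_lt (mem_Iio.mp ht)))).deriv]
          exact div_nonneg (hr t) (sq_nonneg _)
      set t₁ : ℝ := t₀ - 1 - (s t₀)⁻¹ with ht₁
      have hinv0 : 0 < (s t₀)⁻¹ := inv_pos.mpr hpos
      have ht₁mem : t₁ ∈ Iic t₀ := by simp only [mem_Iic, ht₁]; linarith
      have := hmono ht₁mem (self_mem_Iic) (by rw [ht₁]; linarith)
      have hinv1 : 0 < (s t₁)⁻¹ := inv_pos.mpr (hspos t₁ ht₁mem)
      simp only [hu] at this
      linarith
  intro t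
  refine ⟨hzero t, ?_⟩
  have hconst : HasDerivAt s 0 t := by
    have : s = fun _ => (0 : ℝ) := funext hzero
    rw [this]; exact hasDerivAt_const t 0
  have := (hs t).unique hconst
  rw [hzero t] at this
  nlinarith [hr t]
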